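/- arXiv:1205.5927 — 2 statements merged into one kernel-verified Lean document; each statement's English description precedes it below -/
import Mathlib

section
/- Let K₀ ⊆ K be two nonempty closed convex sets in R^m. For any x ∈ R^m, dist(P_K(x), K₀)² + dist(x, K)² ≤ dist(x, K₀)². -/
set_option maxHeartbeats 1000000


theorem stmt_2 (m : ℕ) (K K0 : Set (EuclideanSpace ℝ (Fin m)))
    (hne0 : K0.Nonempty) (hcl0 : IsClosed K0) (hconv0 : Convex ℝ K0)
    (hne : K.Nonempty) (hcl : IsClosed K) (hconv : Convex ℝ K)
    (hsub : K0 ⊆ K)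
    (P : EuclideanSpace ℝ (Fin m) → EuclideanSpace ℝ (Fin m))
    (hP : ∀ x, P x ∈ K ∧ ∀ y ∈ K, ‖x - P x‖ ≤ ‖x - y‖)
    (x : EuclideanSpace ℝ (Fin m)) :
    Metric.infDist (P x) K0 ^ 2 + Metric.infDist x K ^ 2 ≤ Metric.infDist x K0 ^ 2 := by
  obtain ⟨hPx, hmin⟩ := hP x
  haveI : Nonempty ↑K := hne.to_subtype
  have hproj : ∀ w ∈ K, (inner ℝ (x - P x) (w - P x) : ℝ) ≤ 0 := by
    rw [← norm_eq_iInf_iff_real_inner_le_zero hconv hPx]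
    apply le_antisymm
    · exact le_ciInf fun w => hmin w w.2
    · have hbdd : BddBelow (Set.range fun w : K => ‖x - ↑w‖) := by
        refine ⟨0, ?_⟩; rintro r ⟨w, rfl⟩; exact norm_nonneg _
      exact ciInf_le hbdd ⟨P x, hPx⟩
  set L := Metric.infDist (P x) K0 ^ 2 + Metric.infDist x K ^ 2 with hL
  have hLnn : 0 ≤ L := by positivity
  have key : ∀ y ∈ K0, L ≤ dist x y ^ 2 := by
    intro y hy
    have h1 : Metric.infDist (P x) K0 ≤ ‖P x - y‖ := by
      simpa [dist_eq_norm] using Metric.infDist_le_dist_of_mem hy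
    have h2 : Metric.infDist x K ≤ ‖x - P x‖ := by
      simpa [dist_eq_norm] using Metric.infDist_le_dist_of_mem hPx
    have hin := hproj y (hsub hy)
    have hexp : ‖(x - P x) + (P x - y)‖ ^ 2
        = ‖x - P x‖ ^ 2 + 2 * inner ℝ (x - P x) (P x - y) + ‖P x - y‖ ^ 2 :=
      norm_add_sq_real _ _
    have hxy : x - y = (x - P x) + (P x - y) := by abel
    have hin2 : 0 ≤ (inner ℝ (x - P x) (P x - y) : ℝ) := by
      have : (P x - y) = -(y - P x) := by abel
      rw [this, inner_neg_right]; linarith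
    have h12 : ‖P x - y‖ ^ 2 + ‖x - P x‖ ^ 2 ≤ ‖x - y‖ ^ 2 := by
      rw [hxy, hexp]; linarith
    have h1' : Metric.infDist (P x) K0 ^ 2 ≤ ‖P x - y‖ ^ 2 :=
      pow_le_pow_left₀ Metric.infDist_nonneg h1 2
    have h2' : Metric.infDist x K ^ 2 ≤ ‖x - P x‖ ^ 2 :=
      pow_le_pow_left₀ Metric.infDist_nonneg h2 2
    rw [dist_eq_norm]
    linarith
  haveI : Nonempty ↑K0 := hne0.to_subtype
  have hsqrt : Real.sqrt L ≤ Metric.infDist x K0 := by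
    rw [Metric.infDist_eq_iInf]
    refine le_ciInf fun y => ?_
    have := key y y.2
    calc Real.sqrt L ≤ Real.sqrt (dist x y ^ 2) := Real.sqrt_le_sqrt this
      _ = dist x y := by rw [Real.sqrt_sq dist_nonneg]
  calc L = Real.sqrt L ^ 2 := (Real.sq_sqrt hLnn).symm
    _ ≤ Metric.infDist x K0 ^ 2 := pow_le_pow_left₀ (Real.sqrt_nonneg _) hsqrt 2
end

section
/- Let K be a nonempty closed convex set in R^m and suppose the iterates satisfy x(k+1) = (1−β_k)·z* + β_k·P_K(z*) + Δ_k where β_k ∈ [0,1], 1 − β_k ≥ Π_{l=0}^k (1−α_l) for a sequence α_l ∈ [0,1), and |Δ_k| ≤ d*·Σ_{l=0}^k α_l. If Σ_l α_l < ∞ and dist(z*, K) > (d*·Σ_{l=0}^∞ α_l)/(Π_{l=0}^∞ (1−α_l)), then liminf_{k→∞} dist(x(k), K) > 0. -/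
open Real Filter

private lemma stmt19_logsum (α : ℕ → ℝ) (hα0 : ∀ l, 0 ≤ α l) (hα1 : ∀ l, α l < 1)
    (hαsum : Summable α) : Summable (fun n => Real.log (1 - α n)) := by
  apply Summable.of_norm_bounded_eventually (g := fun n => 2 * α n) (hαsum.mul_left 2)
  rw [Nat.cofinite_eq_atTop]
  have h0 := hαsum.tendsto_atTop_zero
  filter_upwards [h0.eventually_le_const (by norm_num : (0:ℝ) < 1/2)] with n hn
  have h1 : (0:ℝ) < 1 - α n := by linarith [hα1 n]
  have hlog : Real.log (1 - α n) ≤ 0 := Real.log_nonpos (by linarith [hα0 n]) (by linarith [hα0 n])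
  rw [Real.norm_eq_abs, abs_of_nonpos hlog, ← Real.log_inv]
  have := Real.log_le_sub_one_of_pos (inv_pos.mpr h1)
  have h2 : (1 - α n)⁻¹ - 1 ≤ 2 * α n := by
    rw [sub_le_iff_le_add, inv_le_iff_one_le_mul₀ h1]
    nlinarith [hα0 n]
  linarith

private lemma stmt19_tprod (α : ℕ → ℝ) (hα0 : ∀ l, 0 ≤ α l) (hα1 : ∀ l, α l < 1)
    (hlogsum : Summable (fun n => Real.log (1 - α n))) (k : ℕ) :
    (0 < ∏' l, (1 - α l)) ∧ (∏' l, (1 - α l)) ≤ ∏ l ∈ Finset.range (k + 1), (1 - α l) := by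
  have hpos : ∀ (u : Unit) (n : ℕ), 0 < (fun n (_ : Unit) => 1 - α n) n u := by
    intro _ n; simpa using hα1 n
  have htp : (∏' l, (1 - α l)) = Real.exp (∑' n, Real.log (1 - α n)) := by
    exact (Real.rexp_tsum_eq_tprod (fun n => by simpa using hα1 n) hlogsum).symm
  have hpart : (∏ l ∈ Finset.range (k + 1), (1 - α l)) =
      Real.exp (∑ l ∈ Finset.range (k + 1), Real.log (1 - α l)) := by
    rw [Real.exp_sum]
    exact Finset.prod_congr rfl fun l _ => (Real.exp_log (by simpa using hα1 l)).symm
  constructor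
  · rw [htp]; exact Real.exp_pos _
  · rw [htp, hpart]
    apply Real.exp_le_exp.mpr
    have := Summable.sum_le_tsum (f := fun n => -Real.log (1 - α n)) (Finset.range (k + 1))
      (fun i _ => by
        simpa using Real.log_nonpos (by linarith [hα1 i] : 0 ≤ 1 - α i) (by linarith [hα0 i]))
      hlogsum.neg
    rw [tsum_neg] at this
    simp only [Finset.sum_neg_distrib] at this
    linarith

theorem stmt_19 (m : ℕ) (K : Set (EuclideanSpace ℝ (Fin m)))
    (hne : K.Nonempty) (hcl : IsClosed K) (hconv : Convex ℝ K)
    (P : EuclideanSpace ℝ (Fin m) → EuclideanSpace ℝ (Fin m))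
    (hP : ∀ x, P x ∈ K ∧ ∀ y ∈ K, ‖x - P x‖ ≤ ‖x - y‖)
    (z : EuclideanSpace ℝ (Fin m)) (d : ℝ) (hd : 0 ≤ d)
    (α : ℕ → ℝ) (hα0 : ∀ l, 0 ≤ α l) (hα1 : ∀ l, α l < 1) (hαsum : Summable α)
    (β : ℕ → ℝ) (hβ : ∀ k, β k ∈ Set.Icc (0 : ℝ) 1)
    (Δ : ℕ → EuclideanSpace ℝ (Fin m))
    (x : ℕ → EuclideanSpace ℝ (Fin m))
    (hx : ∀ k, x (k + 1) = (1 - β k) • z + β k • P z + Δ k)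
    (hβα : ∀ k, 1 - β k ≥ ∏ l ∈ Finset.range (k + 1), (1 - α l))
    (hΔ : ∀ k, ‖Δ k‖ ≤ d * ∑ l ∈ Finset.range (k + 1), α l)
    (hfar : Metric.infDist z K > (d * ∑' l, α l) / (∏' l, (1 - α l))) :
    0 < Filter.atTop.liminf (fun k => Metric.infDist (x k) K) := by
  set D := Metric.infDist z K with hD
  set S := ∑' l, α l with hS
  set Q := ∏' l, (1 - α l) with hQ
  have hlogsum := stmt19_logsum α hα0 hα1 hαsum
  have hQpos : 0 < Q := (stmt19_tprod α hα0 hα1 hlogsum 0).1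
  have hQle : ∀ k, Q ≤ ∏ l ∈ Finset.range (k + 1), (1 - α l) :=
    fun k => (stmt19_tprod α hα0 hα1 hlogsum k).2
  have hSle : ∀ k, (∑ l ∈ Finset.range (k + 1), α l) ≤ S :=
    fun k => Summable.sum_le_tsum (Finset.range (k + 1)) (fun i _ => hα0 i) hαsum
  have hDpos : 0 ≤ D := Metric.infDist_nonneg
  -- the key constant
  have hc : 0 < Q * D - d * S := by
    have := (div_lt_iff₀ hQpos).mp hfar
    nlinarith
  -- norm of z - P z equals D
  have hzPz : ‖z - P z‖ = D := by
    apply le_antisymm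
    · by_contra hlt
      push_neg at hlt
      obtain ⟨y, hy, hdy⟩ := (Metric.infDist_lt_iff hne).mp hlt
      rw [dist_eq_norm] at hdy
      exact absurd ((hP z).2 y hy) (not_le.mpr hdy)
    · have := Metric.infDist_le_dist_of_mem (x := z) (hP z).1
      rwa [dist_eq_norm] at this
  -- per-step lower bound
  have key : ∀ k, Q * D - d * S ≤ Metric.infDist (x (k + 1)) K := by
    intro k
    set w := (1 - β k) • z + β k • P z with hw
    have hβ0 := (hβ k).1
    have hβ1 := (hβ k).2
    have hzw : dist z w = β k * D := by
      have hzw' : z - w = β k • (z - P z) := by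
        rw [hw]; module
      rw [dist_eq_norm, hzw', norm_smul, Real.norm_eq_abs, abs_of_nonneg hβ0, hzPz]
    have h1 : (1 - β k) * D ≤ Metric.infDist w K := by
      have := Metric.infDist_le_infDist_add_dist (x := z) (y := w) (s := K)
      rw [hzw] at this
      nlinarith
    have h2 : Metric.infDist w K ≤ Metric.infDist (x (k + 1)) K + ‖Δ k‖ := by
      have := Metric.infDist_le_infDist_add_dist (x := w) (y := x (k + 1)) (s := K)
      have hdist : dist w (x (k + 1)) = ‖Δ k‖ := by
        rw [dist_eq_norm, norm_sub_rev, hx k, hw]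
        congr 1
        abel
      rwa [hdist] at this
    have h3 : Q * D ≤ (1 - β k) * D := by
      have := le_trans (hQle k) (hβα k)
      nlinarith
    have h4 : ‖Δ k‖ ≤ d * S := le_trans (hΔ k) (by nlinarith [hSle k, hΔ k])
    linarith
  -- conclude via liminf
  have hev : ∀ᶠ k in atTop, Q * D - d * S ≤ Metric.infDist (x k) K := by
    filter_upwards [eventually_ge_atTop 1] with k hk
    obtain ⟨j, rfl⟩ := Nat.exists_eq_add_of_le hk
    simpa [add_comm] using key j
  have hbdd : IsBoundedUnder (· ≤ ·) atTop (fun k => Metric.infDist (x k) K) := by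
    apply Filter.isBoundedUnder_of_eventually_le (a := 2 * D + d * S)
    filter_upwards [eventually_ge_atTop 1] with k hk
    obtain ⟨j, rfl⟩ := Nat.exists_eq_add_of_le hk
    have hβ0 := (hβ j).1
    have hβ1 := (hβ j).2
    have hub : Metric.infDist (x (1 + j)) K ≤ D + dist z (x (1 + j)) := by
      have := Metric.infDist_le_infDist_add_dist (x := x (1 + j)) (y := z) (s := K)
      rwa [dist_comm] at this
    have hdzx : dist z (x (1 + j)) ≤ β j * D + ‖Δ j‖ := by
      have hsub : z - x (1 + j) = β j • (z - P z) - Δ j := by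
        rw [add_comm 1 j, hx j]; module
      rw [dist_eq_norm, hsub]
      calc ‖β j • (z - P z) - Δ j‖ ≤ ‖β j • (z - P z)‖ + ‖Δ j‖ := norm_sub_le _ _
        _ = β j * D + ‖Δ j‖ := by
            rw [norm_smul, Real.norm_eq_abs, abs_of_nonneg hβ0, hzPz]
    have h4 : ‖Δ j‖ ≤ d * S := le_trans (hΔ j) (by nlinarith [hSle j, hΔ j])
    nlinarith
  have hlim : Q * D - d * S ≤ atTop.liminf (fun k => Metric.infDist (x k) K) :=
    le_liminf_of_le hbdd.isCoboundedUnder_ge hev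
  linarith
end
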